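/- Let f : [0,∞) → ℝ be non-zero, monotone, and g : [0,∞) → [0,∞) satisfy f(s + g(s)·t) = f(s) + f(t) for all s,t ≥ 0. Then f is injective. -/

import Mathlib

lemma mono_case (f g : ℝ → ℝ)
    (hgnn : ∀ s : ℝ, 0 ≤ s → 0 ≤ g s)
    (heq : ∀ s t : ℝ, 0 ≤ s → 0 ≤ t → f (s + g s * t) = f s + f t)
    (hfnz : ∃ s : ℝ, 0 ≤ s ∧ f s ≠ 0)
    (hmono : MonotoneOn f (Set.Ici 0)) :
    Set.InjOn f (Set.Ici 0) := by
  have f0 : f 0 = 0 := by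
    have h := heq 0 0 le_rfl le_rfl
    simp at h
    linarith
  obtain ⟨s₀, hs₀, hfs₀⟩ := hfnz
  have hfs₀pos : 0 < f s₀ := by
    have h := hmono (Set.mem_Ici.2 (le_refl (0:ℝ))) (Set.mem_Ici.2 hs₀) hs₀
    rw [f0] at h
    exact lt_of_le_of_ne h (Ne.symm hfs₀)
  have gpos : ∀ s, 0 ≤ s → 0 < g s := by
    intro s hs
    rcases (hgnn s hs).lt_or_eq with h | h
    · exact h
    · exfalso
      have h2 := heq s s₀ hs hs₀
      rw [← h] at h2
      simp at h2
      linarith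
  have main : ∀ a b : ℝ, 0 ≤ a → a < b → f a ≠ f b := by
    intro a b ha hab hfe
    have hga := gpos a ha
    set t₀ := (b - a) / g a with ht₀def
    have ht₀pos : 0 < t₀ := div_pos (by linarith) hga
    have hft₀ : f t₀ = 0 := by
      have h := heq a t₀ ha ht₀pos.le
      rw [show a + g a * t₀ = b by rw [ht₀def, mul_div_assoc', mul_div_cancel_left₀ _ hga.ne']; ring] at h
      linarith
    set Z : Set ℝ := {x | 0 ≤ x ∧ f x = 0} with hZ
    have hZne : t₀ ∈ Z := ⟨ht₀pos.le, hft₀⟩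
    have hZbdd : ∀ x ∈ Z, x ≤ s₀ := by
      intro x hx
      by_contra hlt
      push_neg at hlt
      have h := hmono (Set.mem_Ici.2 hs₀) (Set.mem_Ici.2 (le_trans hs₀ hlt.le)) hlt.le
      rw [hx.2] at h
      linarith
    set M := sSup Z with hM
    have hMub : ∀ x ∈ Z, x ≤ M := fun x hx => le_csSup ⟨s₀, hZbdd⟩ hx
    have hMpos : 0 < M := lt_of_lt_of_le ht₀pos (hMub t₀ hZne)
    -- every point below M is a zero
    have hzero : ∀ x, 0 ≤ x → x < M → f x = 0 := by
      intro x hx hxM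
      obtain ⟨z, hz, hxz⟩ := exists_lt_of_lt_csSup ⟨t₀, hZne⟩ hxM
      have h1 : f x ≤ f z := hmono (Set.mem_Ici.2 hx) (Set.mem_Ici.2 (le_trans hx hxz.le)) hxz.le
      have h2 : f 0 ≤ f x := hmono (Set.mem_Ici.2 (le_refl (0:ℝ))) (Set.mem_Ici.2 hx) hx
      rw [hz.2] at h1
      rw [f0] at h2
      linarith
    -- every point above M has positive value
    have hposgt : ∀ x, M < x → 0 < f x := by
      intro x hx
      have hx0 : 0 ≤ x := le_trans hMpos.le hx.le
      have h2 : f 0 ≤ f x := hmono (Set.mem_Ici.2 (le_refl (0:ℝ))) (Set.mem_Ici.2 hx0) hx0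
      rw [f0] at h2
      rcases h2.lt_or_eq with h | h
      · exact h
      · exfalso
        have : x ∈ Z := ⟨hx0, h.symm⟩
        exact absurd (hMub x this) (not_le.2 hx)
    -- key bound: s + g s * M ≤ M for s < M
    have hkey : ∀ s, 0 ≤ s → s < M → s + g s * M ≤ M := by
      intro s hs hsM
      by_contra hcon
      push_neg at hcon
      have hgs := gpos s hs
      have hq : (M - s) / g s < M := by
        rw [div_lt_iff₀ hgs]
        nlinarith
      obtain ⟨z, hz, hqz⟩ := exists_lt_of_lt_csSup ⟨t₀, hZne⟩ hq
      have hgz : (M - s) < g s * z := by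
        rw [div_lt_iff₀ hgs] at hqz
        nlinarith
      have hmem : s + g s * z ∈ Z := by
        constructor
        · have : 0 ≤ g s * z := mul_nonneg hgs.le hz.1
          linarith
        · have h := heq s z hs hz.1
          rw [hzero s hs hsM, hz.2] at h
          simpa using h
      have := hMub _ hmem
      linarith
    -- f is constant on (M, t]
    have hconst : ∀ t y, M < y → y ≤ t → f y = f t := by
      intro t y hMy hyt
      have hMt : M < t := lt_of_lt_of_le hMy hyt
      set s := M * (t - y) / (t - M) with hsdef
      have hs0 : 0 ≤ s := by
        apply div_nonneg
        · nlinarith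
        · linarith
      have hsM : s < M := by
        rw [hsdef, div_lt_iff₀ (by linarith)]
        nlinarith
      have hseq : s * (t - M) = M * (t - y) := by
        rw [hsdef]
        exact div_mul_cancel₀ _ (sub_ne_zero.mpr hMt.ne')
      have ht0 : 0 ≤ t := le_trans hMpos.le hMt.le
      have hgsM := hkey s hs0 hsM
      -- x := s + g s * t satisfies f x = f t and x ≤ y
      have hfx : f (s + g s * t) = f t := by
        have h := heq s t hs0 ht0
        rw [hzero s hs0 hsM] at h
        simpa using h
      have hxy : s + g s * t ≤ y := by
        have h1 : g s * M ≤ M - s := by linarith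
        have h2 : g s * M * t ≤ (M - s) * t := mul_le_mul_of_nonneg_right h1 ht0
        have h3 : M * (s + g s * t) ≤ M * y := by nlinarith
        exact le_of_mul_le_mul_left h3 hMpos
      have hx0 : 0 ≤ s + g s * t := add_nonneg hs0 (mul_nonneg (hgnn s hs0) ht0)
      have hy0 : 0 ≤ y := le_trans hMpos.le hMy.le
      have h4 : f (s + g s * t) ≤ f y := hmono (Set.mem_Ici.2 hx0) (Set.mem_Ici.2 hy0) hxy
      have h5 : f y ≤ f t := hmono (Set.mem_Ici.2 hy0) (Set.mem_Ici.2 ht0) hyt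
      linarith [hfx ▸ h4]
    -- contradiction
    have hc : 0 < f (M + 1) := hposgt (M + 1) (by linarith)
    have hM1 : (0:ℝ) ≤ M + 1 := by linarith
    have h6 := heq (M + 1) (M + 1) hM1 hM1
    have hpt : M < (M + 1) + g (M + 1) * (M + 1) := by nlinarith [hgnn (M+1) hM1]
    have h7 : f ((M + 1) + g (M + 1) * (M + 1)) = f ((M+1) + g (M+1) * (M+1)) := rfl
    rcases le_or_gt ((M + 1) + g (M + 1) * (M + 1)) (M + 1) with hle | hlt
    · have := hconst (M+1) _ hpt hle
      linarith
    · have := hconst _ (M+1) (by linarith) hlt.le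
      linarith
  intro a ha b hb h
  by_contra hne
  rcases lt_or_gt_of_ne hne with hlt | hlt
  · exact main a b ha hlt h
  · exact main b a hb hlt h.symm

/-- a non-zero monotone solution f is injective on [0,∞). -/
theorem stmt13 (f : ℝ → ℝ) (g : ℝ → ℝ)
    (hgnn : ∀ s : ℝ, 0 ≤ s → 0 ≤ g s)
    (heq : ∀ s t : ℝ, 0 ≤ s → 0 ≤ t → f (s + g s * t) = f s + f t)
    (hfnz : ∃ s : ℝ, 0 ≤ s ∧ f s ≠ 0)
    (hmono : MonotoneOn f (Set.Ici 0) ∨ AntitoneOn f (Set.Ici 0)) :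
    Set.InjOn f (Set.Ici 0) := by
  rcases hmono with hm | ha
  · exact mono_case f g hgnn heq hfnz hm
  · have h := mono_case (fun x => -f x) g hgnn
      (fun s t hs ht => by simp [heq s t hs ht]; ring)
      (by obtain ⟨s, hs, hf⟩ := hfnz; exact ⟨s, hs, by simpa using hf⟩)
      (fun x hx y hy hxy => by simpa using ha hx hy hxy)
    intro a haa b hbb hab
    have := h haa hbb (by simpa using hab)
    exact this
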